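/- arXiv:2201.06127 — 5 statements merged into one kernel-verified Lean document; each statement's English description precedes it below -/
import Mathlib

section
/- Let G be a finite graph, let λ > 0 and β ∈ [0,∞), and set p := 1 − e^{−β}. Then for every integer k ≥ 1, Z_k(G, λ, β) = 𝔼[ Z(G_p, λ)^k ], where G_p is the random subgraph of G obtained by retaining each edge independently with probability p. -/
open scoped Classical
open Filter

noncomputable section

/-- The `d`-dimensional hypercube graph on `{0,1}^d`: vertices are functions `Fin d → Bool`,
two vertices being adjacent iff they differ in exactly one coordinate. -/
def hypercube (d : ℕ) : SimpleGraph (Fin d → Bool) where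
  Adj u v := (Finset.univ.filter fun i => u i ≠ v i).card = 1
  symm := by
    constructor
    intro u v h
    have hset : (Finset.univ.filter fun i => v i ≠ u i)
        = (Finset.univ.filter fun i => u i ≠ v i) := by
      apply Finset.filter_congr
      intro i _
      exact ne_comm
    rw [hset]
    exact h
  loopless := by
    constructor
    intro u h
    simp at h

/-- The collection of independent sets of a finite graph, as a `Finset` of `Finset`s. -/
def indepFinsets {V : Type*} [Fintype V] (G : SimpleGraph V) : Finset (Finset V) :=
  Finset.univ.filter fun s => ∀ u ∈ s, ∀ v ∈ s, ¬ G.Adj u v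

/-- The number of independent sets of a finite graph. -/
def numIndep {V : Type*} [Fintype V] (G : SimpleGraph V) : ℕ :=
  (indepFinsets G).card

/-- The hard-core partition function `Z(G,λ) = Σ_{I independent} λ^{|I|}`. -/
def hcZ {V : Type*} [Fintype V] (G : SimpleGraph V) (lam : ℝ) : ℝ :=
  ∑ s ∈ indepFinsets G, lam ^ s.card

/-- The edge set of a finite graph, as a `Finset`. -/
def edgeFins {V : Type*} [Fintype V] (G : SimpleGraph V) : Finset (Sym2 V) :=
  Finset.univ.filter fun e => e ∈ G.edgeSet

/-- Expectation of `f` applied to the random subgraph `G_p` of `G`, in which each edge of `G`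
is retained independently with probability `p`. -/
def rsExp {V : Type*} [Fintype V] (G : SimpleGraph V) (p : ℝ) (f : SimpleGraph V → ℝ) : ℝ :=
  ∑ ω ∈ (edgeFins G).powerset,
    p ^ ω.card * (1 - p) ^ ((edgeFins G).card - ω.card) * f (SimpleGraph.fromEdgeSet (↑ω : Set (Sym2 V)))

/-- Probability that the random subgraph `G_p` of `G` satisfies the property `P`. -/
def rsProb {V : Type*} [Fintype V] (G : SimpleGraph V) (p : ℝ) (P : SimpleGraph V → Prop) : ℝ :=
  ∑ ω ∈ (edgeFins G).powerset.filter
      (fun s : Finset (Sym2 V) => P (SimpleGraph.fromEdgeSet (↑s : Set (Sym2 V)))),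
    p ^ ω.card * (1 - p) ^ ((edgeFins G).card - ω.card)

/-- `𝔼 i(Q_{d,p})`, the expected number of independent sets of `Q_{d,p}`. -/
def iE (d : ℕ) (p : ℝ) : ℝ :=
  rsExp (hypercube d) p fun G => (numIndep G : ℝ)

/-- The edges of `G` spanned by the vertex set `s`, i.e. `E(s)`. -/
def spanEdges {V : Type*} [Fintype V] (G : SimpleGraph V) (s : Finset V) : Finset (Sym2 V) :=
  (edgeFins G).filter fun e => ∀ v ∈ e, v ∈ s

/-- The partition function `Z_k(G,λ,β)` of the `k`-system. -/
def Zk {V : Type*} [Fintype V] (G : SimpleGraph V) (lam beta : ℝ) (k : ℕ) : ℝ :=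
  ∑ I : Fin k → Finset V,
    lam ^ (∑ i, (I i).card) *
      Real.exp (-beta * ((Finset.univ.biUnion fun i => spanEdges G (I i)).card : ℝ))

lemma binom_sum {α : Type*} [DecidableEq α] (F : Finset α) (p q : ℝ) :
    ∑ ω ∈ F.powerset, p ^ ω.card * q ^ (F.card - ω.card) = (p + q) ^ F.card := by
  have h : (p + q) ^ F.card = ∑ t ∈ F.powerset, p ^ t.card * q ^ (F.card - t.card) := by
    rw [← Finset.prod_const, Finset.prod_add]
    exact Finset.sum_congr rfl fun t ht => by
      rw [Finset.prod_const, Finset.prod_const,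
        Finset.card_sdiff_of_subset (Finset.mem_powerset.mp ht)]
  exact h.symm

lemma disj_sum {α : Type*} [DecidableEq α] (F U : Finset α) (hU : U ⊆ F) (p q : ℝ)
    (hpq : p + q = 1) :
    ∑ ω ∈ F.powerset.filter (fun ω => Disjoint ω U),
      p ^ ω.card * q ^ (F.card - ω.card) = q ^ U.card := by
  have hfe : F.powerset.filter (fun ω => Disjoint ω U) = (F \ U).powerset := by
    ext ω
    simp only [Finset.mem_filter, Finset.mem_powerset, Finset.subset_sdiff]
  rw [hfe]
  have hcard : (F \ U).card = F.card - U.card := Finset.card_sdiff_of_subset hU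
  have hU' : U.card ≤ F.card := Finset.card_le_card hU
  calc ∑ ω ∈ (F \ U).powerset, p ^ ω.card * q ^ (F.card - ω.card)
      = ∑ ω ∈ (F \ U).powerset, (p ^ ω.card * q ^ ((F \ U).card - ω.card)) * q ^ U.card := by
        apply Finset.sum_congr rfl
        intro ω hω
        have hωle : ω.card ≤ (F \ U).card := Finset.card_le_card (Finset.mem_powerset.mp hω)
        rw [mul_assoc, ← pow_add]
        congr 2
        omega
    _ = q ^ U.card := by
        rw [← Finset.sum_mul, binom_sum, hpq, one_pow, one_mul]

lemma indep_iff {V : Type*} [Fintype V] (G : SimpleGraph V)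
    (ω : Finset (Sym2 V)) (hω : ω ⊆ edgeFins G) (s : Finset V) :
    s ∈ indepFinsets (SimpleGraph.fromEdgeSet (↑ω : Set (Sym2 V)))
      ↔ Disjoint ω (spanEdges G s) := by
  classical
  simp only [indepFinsets, Finset.mem_filter]
  rw [Finset.disjoint_left]
  simp only [Finset.mem_univ, true_and]
  constructor
  · intro h e he hes
    rw [spanEdges, Finset.mem_filter] at hes
    obtain ⟨heG, hvs⟩ := hes
    induction e using Sym2.ind with
    | _ u v =>
      have hGadj : G.Adj u v := by
        rw [edgeFins, Finset.mem_filter] at heG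
        exact heG.2
      exact h u (hvs u (Sym2.mem_mk_left u v)) v (hvs v (Sym2.mem_mk_right u v))
        (by rw [SimpleGraph.fromEdgeSet_adj]; exact ⟨by simpa using he, hGadj.ne⟩)
  · intro h u hu v hv hadj
    rw [SimpleGraph.fromEdgeSet_adj] at hadj
    obtain ⟨hmem, hne⟩ := hadj
    have hmem' : s(u, v) ∈ ω := by simpa using hmem
    refine h hmem' ?_
    rw [spanEdges, Finset.mem_filter]
    refine ⟨hω hmem', ?_⟩
    intro w hw
    rcases Sym2.mem_iff.mp hw with rfl | rfl
    · exact hu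
    · exact hv

lemma hcZ_pow {V : Type*} [Fintype V] (H : SimpleGraph V) (lam : ℝ) (k : ℕ) :
    hcZ H lam ^ k = ∑ I : Fin k → Finset V,
      if ∀ i, I i ∈ indepFinsets H then lam ^ (∑ i, (I i).card) else 0 := by
  classical
  have h1 : hcZ H lam ^ k = ∏ _i : Fin k, ∑ s ∈ indepFinsets H, lam ^ s.card := by
    simp [hcZ, Finset.prod_const]
  rw [h1, Finset.prod_univ_sum]
  have hset : Finset.univ.filter (fun I : Fin k → Finset V => ∀ i, I i ∈ indepFinsets H)
      = Fintype.piFinset (fun _ => indepFinsets H) := by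
    ext I
    simp [Fintype.mem_piFinset]
  rw [eq_comm, ← Finset.sum_filter, hset]
  exact Finset.sum_congr rfl fun I _ =>
    (Finset.prod_pow_eq_pow_sum Finset.univ (fun i => (I i).card) lam).symm

theorem statement7 {V : Type*} [Fintype V] (G : SimpleGraph V) (lam beta : ℝ)
    (hlam : 0 < lam) (hbeta : 0 ≤ beta) (k : ℕ) (hk : 1 ≤ k) :
    Zk G lam beta k = rsExp G (1 - Real.exp (-beta)) fun H => (hcZ H lam) ^ k := by
  classical
  have hq : (1:ℝ) - (1 - Real.exp (-beta)) = Real.exp (-beta) := by ring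
  simp only [Zk, rsExp, hq]
  have step1 : ∀ ω ∈ (edgeFins G).powerset,
      (1 - Real.exp (-beta)) ^ ω.card * Real.exp (-beta) ^ ((edgeFins G).card - ω.card) *
        hcZ (SimpleGraph.fromEdgeSet (↑ω : Set (Sym2 V))) lam ^ k
      = ∑ I : Fin k → Finset V,
          if Disjoint ω (Finset.univ.biUnion fun i => spanEdges G (I i)) then
            (1 - Real.exp (-beta)) ^ ω.card *
              Real.exp (-beta) ^ ((edgeFins G).card - ω.card) * lam ^ (∑ i, (I i).card)
          else 0 := by
    intro ω hω
    rw [hcZ_pow, Finset.mul_sum]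
    apply Finset.sum_congr rfl
    intro I _
    have hiff : (∀ i, I i ∈ indepFinsets (SimpleGraph.fromEdgeSet (↑ω : Set (Sym2 V))))
        ↔ Disjoint ω (Finset.univ.biUnion fun i => spanEdges G (I i)) := by
      rw [Finset.disjoint_biUnion_right]
      constructor
      · intro h i _
        exact (indep_iff G ω (Finset.mem_powerset.mp hω) (I i)).mp (h i)
      · intro h i
        exact (indep_iff G ω (Finset.mem_powerset.mp hω) (I i)).mpr (h i (Finset.mem_univ i))
    rw [mul_ite, mul_zero]
    exact if_congr hiff rfl rfl
  rw [Finset.sum_congr rfl step1, Finset.sum_comm]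
  apply Finset.sum_congr rfl
  intro I _
  set U := Finset.univ.biUnion fun i => spanEdges G (I i) with hUdef
  have hUsub : U ⊆ edgeFins G := by
    intro e he
    rw [hUdef, Finset.mem_biUnion] at he
    obtain ⟨i, _, hei⟩ := he
    exact Finset.filter_subset _ _ hei
  have hsum : ∑ ω ∈ (edgeFins G).powerset,
      (if Disjoint ω U then
        (1 - Real.exp (-beta)) ^ ω.card *
          Real.exp (-beta) ^ ((edgeFins G).card - ω.card) * lam ^ (∑ i, (I i).card)
      else 0)
      = (∑ ω ∈ (edgeFins G).powerset.filter (fun ω => Disjoint ω U),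
          (1 - Real.exp (-beta)) ^ ω.card *
            Real.exp (-beta) ^ ((edgeFins G).card - ω.card)) * lam ^ (∑ i, (I i).card) := by
    rw [Finset.sum_mul, ← Finset.sum_filter]
  rw [hsum, disj_sum (edgeFins G) U hUsub _ _ (by ring)]
  rw [mul_comm]
  congr 1
  rw [← Real.exp_nat_mul]
  congr 1
  ring
end
end

section
/- For all integers d ≥ 1, k ≥ 1, all λ > 0, β ≥ 0, and every polymer γ = (A₁,…,A_k), the weight satisfies ω(γ) ≤ λ^{‖γ‖} · (α̃_k)^{‖N(γ)‖}, where ‖γ‖ := |A₁|+⋯+|A_k|, ‖N(γ)‖ := |N(A₁)|+⋯+|N(A_k)|, α_k := (1 + ((1+λ)^k − 1)e^{−β})/(1+λ)^k and α̃_k := α_k^{1/k}. -/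
open scoped Classical
open Filter

noncomputable section

/-- The neighborhood `N(A)` of a vertex set `A` in `G`. -/
def nbhd {V : Type*} [Fintype V] (G : SimpleGraph V) (A : Finset V) : Finset V :=
  Finset.univ.filter fun v => ∃ u ∈ A, G.Adj u v

/-- The closure `[A] = {v : N(v) ⊆ N(A)}` of a vertex set `A` in `G`. -/
def vClosure {V : Type*} [Fintype V] (G : SimpleGraph V) (A : Finset V) : Finset V :=
  Finset.univ.filter fun v => ∀ w, G.Adj v w → w ∈ nbhd G A

/-- The even vertices of the hypercube. -/
def evenV (d : ℕ) : Finset (Fin d → Bool) :=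
  Finset.univ.filter fun v => (Finset.univ.filter fun i => v i = true).card % 2 = 0

/-- The odd vertices of the hypercube. -/
def oddV (d : ℕ) : Finset (Fin d → Bool) :=
  Finset.univ.filter fun v => (Finset.univ.filter fun i => v i = true).card % 2 = 1

/-- The edges of `G` with one endpoint in `A` and the other in `B`, i.e. `E(A,B)`. -/
def crossEdges {V : Type*} [Fintype V] (G : SimpleGraph V) (A B : Finset V) : Finset (Sym2 V) :=
  (edgeFins G).filter fun e => ∃ u ∈ A, ∃ v ∈ B, e = s(u, v)

/-- The graph `H_γ` associated to a tuple `γ = (A₁, …, A_k)` of vertex sets of `Q_d`. -/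
def polymerGraph (d k : ℕ) (A : Fin k → Finset (Fin d → Bool)) :
    SimpleGraph ((i : Fin k) × {u : Fin d → Bool // u ∈ A i}) where
  Adj x y :=
    (x.1 = y.1 ∧ (hypercube d).dist x.2.1 y.2.1 = 2) ∨
      (x.1 ≠ y.1 ∧ (hypercube d).dist x.2.1 y.2.1 ≤ 1)
  symm := by
    constructor
    rintro x y (⟨h1, h2⟩ | ⟨h1, h2⟩)
    · exact Or.inl ⟨h1.symm, by rwa [SimpleGraph.dist_comm]⟩
    · exact Or.inr ⟨fun h => h1 h.symm, by rwa [SimpleGraph.dist_comm]⟩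
  loopless := by
    constructor
    rintro x (⟨h1, h2⟩ | ⟨h1, h2⟩)
    · simp [SimpleGraph.dist_self] at h2
    · exact h1 rfl

/-- `γ = (A₁, …, A_k)` is a polymer: each `A_i` lies in one side of the hypercube, each
closure `[A_i]` has size at most `(3/4)·2^{d−1}`, and `H_γ` is connected. -/
def IsPolymer (d k : ℕ) (A : Fin k → Finset (Fin d → Bool)) : Prop :=
  (∀ i, A i ⊆ evenV d ∨ A i ⊆ oddV d) ∧
  (∀ i, ((vClosure (hypercube d) (A i)).card : ℝ) ≤ (3 / 4) * 2 ^ (d - 1)) ∧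
  (polymerGraph d k A).Connected

/-- The weight `ω(γ)` of a polymer `γ = (A₁, …, A_k)`. -/
def polymerWeight (d k : ℕ) (lam beta : ℝ) (A : Fin k → Finset (Fin d → Bool)) : ℝ :=
  ∑ B ∈ (Finset.univ : Finset (Fin k → Finset (Fin d → Bool))).filter
      (fun B => ∀ i, B i ⊆ nbhd (hypercube d) (A i)),
    lam ^ ((∑ i, (A i).card) + ∑ i, (B i).card) /
        (1 + lam) ^ (∑ i, (nbhd (hypercube d) (A i)).card) *
      Real.exp (-beta *
        ((Finset.univ.biUnion fun i => crossEdges (hypercube d) (A i) (B i)).card : ℝ))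

/-- Binomial-type expansion over powersets. -/
lemma aux_binom {ι : Type*} [DecidableEq ι] (t : Finset ι) (a b : ℝ) :
    ∑ s ∈ t.powerset, a ^ s.card * b ^ (t.card - s.card) = (a + b) ^ t.card := by
  have h := Finset.prod_add (fun _ : ι => a) (fun _ : ι => b) t
  rw [Finset.prod_const] at h
  rw [h]
  apply Finset.sum_congr rfl
  intro s hs
  rw [Finset.mem_powerset] at hs
  rw [Finset.prod_const, Finset.prod_const, Finset.card_sdiff_of_subset hs]

/-- The key identity: expectation of indicator that a random edge set avoids S. -/
lemma aux_qpow {ι : Type*} [DecidableEq ι] (F S : Finset ι) (hS : S ⊆ F) (q : ℝ) :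
    ∑ η ∈ F.powerset, (1 - q) ^ η.card * q ^ (F.card - η.card) *
      (if S ∩ η = ∅ then (1:ℝ) else 0) = q ^ S.card := by
  have h1 : ∀ η ∈ F.powerset, (1 - q) ^ η.card * q ^ (F.card - η.card) *
      (if S ∩ η = ∅ then (1:ℝ) else 0)
      = if S ∩ η = ∅ then (1 - q) ^ η.card * q ^ (F.card - η.card) else 0 := by
    intro η _; split <;> simp
  rw [Finset.sum_congr rfl h1, ← Finset.sum_filter]
  have h2 : F.powerset.filter (fun η => S ∩ η = ∅) = (F \ S).powerset := by
    ext η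
    simp only [Finset.mem_filter, Finset.mem_powerset, Finset.subset_sdiff,
      ← Finset.disjoint_iff_inter_eq_empty, disjoint_comm (a := S)]
  rw [h2]
  have hcard : (F \ S).card = F.card - S.card := Finset.card_sdiff_of_subset hS
  have hSle : S.card ≤ F.card := Finset.card_le_card hS
  have h3 : ∀ η ∈ (F \ S).powerset, (1 - q) ^ η.card * q ^ (F.card - η.card)
      = q ^ S.card * ((1 - q) ^ η.card * q ^ ((F \ S).card - η.card)) := by
    intro η hη
    rw [Finset.mem_powerset] at hη
    have hle : η.card ≤ (F \ S).card := Finset.card_le_card hη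
    have : F.card - η.card = S.card + ((F \ S).card - η.card) := by omega
    rw [this, pow_add]; ring
  rw [Finset.sum_congr rfl h3, ← Finset.mul_sum, aux_binom]
  norm_num

/-- Finite weighted Hölder inequality for k functions. -/
lemma aux_holder {ι : Type*} (s : Finset ι) (k : ℕ) (hk : 1 ≤ k)
    (w : ι → ℝ) (g : Fin k → ι → ℝ) (hw : ∀ x ∈ s, 0 ≤ w x)
    (hg : ∀ i, ∀ x ∈ s, 0 ≤ g i x) :
    ∑ x ∈ s, w x * ∏ i, g i x ≤ ∏ i, (∑ x ∈ s, w x * g i x ^ k) ^ ((1:ℝ)/k) := by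
  have hk0 : (k:ℝ) ≠ 0 := by positivity
  set M : Fin k → ℝ := fun i => ∑ x ∈ s, w x * g i x ^ k with hM
  have hMnn : ∀ i, 0 ≤ M i := fun i =>
    Finset.sum_nonneg fun x hx => mul_nonneg (hw x hx) (pow_nonneg (hg i x hx) k)
  by_cases hzero : ∃ i, M i = 0
  · obtain ⟨i0, hi0⟩ := hzero
    have hterms : ∀ x ∈ s, w x * g i0 x ^ k = 0 := by
      intro x hx
      have := (Finset.sum_eq_zero_iff_of_nonneg
        (fun x hx => mul_nonneg (hw x hx) (pow_nonneg (hg i0 x hx) k))).mp hi0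
      exact this x hx
    have hLHS : ∑ x ∈ s, w x * ∏ i, g i x = 0 := by
      apply Finset.sum_eq_zero
      intro x hx
      rcases mul_eq_zero.mp (hterms x hx) with h | h
      · rw [h, zero_mul]
      · have : g i0 x = 0 := by
          have := pow_eq_zero_iff (n := k) (by omega) |>.mp h
          exact this
        rw [Finset.prod_eq_zero (Finset.mem_univ i0) this, mul_zero]
    rw [hLHS]
    apply Finset.prod_nonneg
    intro i _
    exact Real.rpow_nonneg (hMnn i) _
  · push_neg at hzero
    have hMpos : ∀ i, 0 < M i := fun i => lt_of_le_of_ne (hMnn i) (Ne.symm (hzero i))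
    set P : ℝ := ∏ i, (M i) ^ ((1:ℝ)/k) with hP
    have hPnn : 0 ≤ P := Finset.prod_nonneg fun i _ => Real.rpow_nonneg (hMnn i) _
    have key : ∀ x ∈ s, ∏ i, g i x ≤ P * ∑ i, (1/(k:ℝ)) * (g i x ^ k / M i) := by
      intro x hx
      have hamgm := Real.geom_mean_le_arith_mean_weighted Finset.univ
        (fun _ : Fin k => 1/(k:ℝ)) (fun i => g i x ^ k / M i)
        (fun i _ => by positivity)
        (by simp [Finset.card_univ]; field_simp)
        (fun i _ => div_nonneg (pow_nonneg (hg i x hx) k) (hMnn i))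
      have hlhs : ∏ i, (g i x ^ k / M i) ^ ((1:ℝ)/k)
          = (∏ i, g i x) / P := by
        rw [← Finset.prod_div_distrib]
        apply Finset.prod_congr rfl
        intro i _
        rw [Real.div_rpow (pow_nonneg (hg i x hx) k) (hMnn i)]
        congr 1
        rw [← Real.rpow_natCast (g i x) k, ← Real.rpow_mul (hg i x hx)]
        rw [mul_one_div, div_self hk0, Real.rpow_one]
      rw [hlhs] at hamgm
      have hPpos : 0 < P := Finset.prod_pos fun i _ => Real.rpow_pos_of_pos (hMpos i) _
      calc ∏ i, g i x = ((∏ i, g i x) / P) * P := (div_mul_cancel₀ _ hPpos.ne').symm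
        _ ≤ (∑ i, (1/(k:ℝ)) * (g i x ^ k / M i)) * P :=
            mul_le_mul_of_nonneg_right hamgm hPnn
        _ = P * ∑ i, (1/(k:ℝ)) * (g i x ^ k / M i) := mul_comm _ _
    calc ∑ x ∈ s, w x * ∏ i, g i x
        ≤ ∑ x ∈ s, w x * (P * ∑ i, (1/(k:ℝ)) * (g i x ^ k / M i)) := by
          apply Finset.sum_le_sum
          intro x hx
          exact mul_le_mul_of_nonneg_left (key x hx) (hw x hx)
      _ = ∑ x ∈ s, ∑ i : Fin k, P * (1/(k:ℝ)) * (w x * g i x ^ k) / M i := by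
          apply Finset.sum_congr rfl; intro x _
          rw [Finset.mul_sum, Finset.mul_sum]
          apply Finset.sum_congr rfl; intro i _
          ring
      _ = ∑ i : Fin k, ∑ x ∈ s, P * (1/(k:ℝ)) * (w x * g i x ^ k) / M i :=
          Finset.sum_comm
      _ = ∑ i : Fin k, P * (1/(k:ℝ)) := by
          apply Finset.sum_congr rfl; intro i _
          rw [← Finset.sum_div, ← Finset.mul_sum]
          have hMi : (∑ x ∈ s, w x * g i x ^ k) = M i := rfl
          rw [hMi, mul_div_assoc, div_self (hzero i), mul_one]
      _ = P := by
          rw [Finset.sum_const, Finset.card_univ, Fintype.card_fin, nsmul_eq_mul]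
          field_simp

/-- Adjacent vertices in the hypercube have different parities. -/
lemma aux_parity {d : ℕ} {u v : Fin d → Bool} (h : (hypercube d).Adj u v) :
    (Finset.univ.filter fun i => u i = true).card % 2 ≠
    (Finset.univ.filter fun i => v i = true).card % 2 := by
  obtain ⟨i0, hi0⟩ := Finset.card_eq_one.mp h
  have hne : u i0 ≠ v i0 := by
    have : i0 ∈ Finset.univ.filter fun i => u i ≠ v i := by rw [hi0]; exact Finset.mem_singleton_self _
    simpa using this
  have hagree : ∀ i, i ≠ i0 → u i = v i := by
    intro i hi
    by_contra hne'
    have : i ∈ Finset.univ.filter fun j => u j ≠ v j := by simpa using hne'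
    rw [hi0, Finset.mem_singleton] at this
    exact hi this
  have key : ∀ (a b : Fin d → Bool), a i0 = true → b i0 = false →
      (∀ i, i ≠ i0 → a i = b i) →
      (Finset.univ.filter fun i => b i = true)
        = (Finset.univ.filter fun i => a i = true).erase i0 := by
    intro a b ha hb hab
    ext i
    simp only [Finset.mem_filter, Finset.mem_erase, Finset.mem_univ, true_and]
    constructor
    · intro hbi
      have hii0 : i ≠ i0 := by rintro rfl; rw [hb] at hbi; exact Bool.false_ne_true hbi
      exact ⟨hii0, by rw [hab i hii0]; exact hbi⟩
    · rintro ⟨hii0, hai⟩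
      rw [← hab i hii0]; exact hai
  rcases Bool.eq_false_or_eq_true (u i0) with hu | hu
  · have hv : v i0 = false := by
      rcases Bool.eq_false_or_eq_true (v i0) with hv | hv
      · exact absurd (hu.trans hv.symm) hne
      · exact hv
    have := key u v hu hv hagree
    have hmem : i0 ∈ Finset.univ.filter fun i => u i = true := by simp [hu]
    rw [this]
    have hcard := Finset.card_erase_of_mem hmem
    have hpos : 0 < (Finset.univ.filter fun i => u i = true).card := Finset.card_pos.mpr ⟨i0, hmem⟩
    omega
  · have hv : v i0 = true := by
      rcases Bool.eq_false_or_eq_true (v i0) with hv | hv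
      · exact hv
      · exact absurd (hu.trans hv.symm) hne
    have := key v u hv hu (fun i hi => (hagree i hi).symm)
    have hmem : i0 ∈ Finset.univ.filter fun i => v i = true := by simp [hv]
    rw [this]
    have hcard := Finset.card_erase_of_mem hmem
    have hpos : 0 < (Finset.univ.filter fun i => v i = true).card := Finset.card_pos.mpr ⟨i0, hmem⟩
    omega

/-- If `A` lies on one side of the hypercube, its neighborhood avoids `A`. -/
lemma aux_nbhd_disj {d : ℕ} {A : Finset (Fin d → Bool)}
    (hA : A ⊆ evenV d ∨ A ⊆ oddV d) :
    ∀ v ∈ nbhd (hypercube d) A, v ∉ A := by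
  intro v hv hvA
  simp only [nbhd, Finset.mem_filter, Finset.mem_univ, true_and] at hv
  obtain ⟨u, huA, hadj⟩ := hv
  have hpar := aux_parity hadj
  rcases hA with h | h
  · have h1 := h huA; have h2 := h hvA
    simp only [evenV, Finset.mem_filter] at h1 h2
    exact hpar (h1.2.trans h2.2.symm)
  · have h1 := h huA; have h2 := h hvA
    simp only [oddV, Finset.mem_filter] at h1 h2
    exact hpar (h1.2.trans h2.2.symm)

/-- The number of cross edges from `A` to `S ⊆ N(A)` is at least `|S|`. -/
lemma aux_cross_card {d : ℕ} (A S : Finset (Fin d → Bool))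
    (hA : A ⊆ evenV d ∨ A ⊆ oddV d) (hS : S ⊆ nbhd (hypercube d) A) :
    S.card ≤ (crossEdges (hypercube d) A S).card := by
  have hex : ∀ v ∈ S, ∃ u, u ∈ A ∧ (hypercube d).Adj u v := by
    intro v hv
    have := hS hv
    simp only [nbhd, Finset.mem_filter, Finset.mem_univ, true_and] at this
    obtain ⟨u, hu, hadj⟩ := this
    exact ⟨u, hu, hadj⟩
  classical
  set f : (Fin d → Bool) → Sym2 (Fin d → Bool) := fun v =>
    if h : ∃ u, u ∈ A ∧ (hypercube d).Adj u v then s(h.choose, v) else s(v, v) with hf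
  apply Finset.card_le_card_of_injOn f
  · intro v hv
    have h := hex v hv
    show f v ∈ crossEdges (hypercube d) A S
    simp only [hf, dif_pos h]
    have hu := h.choose_spec
    simp only [crossEdges, edgeFins, Finset.mem_filter, Finset.mem_univ, true_and]
    refine ⟨?_, h.choose, hu.1, v, hv, rfl⟩
    rw [SimpleGraph.mem_edgeSet]
    exact hu.2
  · intro v hv v' hv' heq
    have h := hex v hv
    have h' := hex v' hv'
    simp only [hf, dif_pos h, dif_pos h'] at heq
    rw [Sym2.eq_iff] at heq
    rcases heq with ⟨-, h2⟩ | ⟨h1, h2⟩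
    · exact h2
    · exfalso
      exact aux_nbhd_disj hA v (hS hv) (h2 ▸ h'.choose_spec.1)

/-- crossEdges decomposes as a union over the second argument. -/
lemma aux_cross_biUnion {V : Type*} [Fintype V] [DecidableEq V] (G : SimpleGraph V) (A B : Finset V) :
    crossEdges G A B = B.biUnion fun v => crossEdges G A {v} := by
  ext e
  simp only [crossEdges, Finset.mem_biUnion, Finset.mem_filter, Finset.mem_singleton]
  aesop

lemma aux_biUnion_inter_empty {ι V : Type*} [DecidableEq V] (s : Finset ι)
    (f : ι → Finset V) (η : Finset V) :
    (s.biUnion f) ∩ η = ∅ ↔ ∀ i ∈ s, f i ∩ η = ∅ := by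
  simp only [Finset.eq_empty_iff_forall_notMem, Finset.mem_inter, Finset.mem_biUnion]
  aesop

/-- Cross edges are edges. -/
lemma aux_crossEdges_subset {V : Type*} [Fintype V] (G : SimpleGraph V) (X B : Finset V) :
    crossEdges G X B ⊆ edgeFins G := Finset.filter_subset _ _

/-- The main estimate on the generating sum. -/
lemma aux_main {V : Type*} [Fintype V] [DecidableEq V] (G : SimpleGraph V) (k : ℕ) (hk : 1 ≤ k)
    (lam q : ℝ) (hlam : 0 < lam) (hq0 : 0 < q) (hq1 : q ≤ 1)
    (A : Fin k → Finset V)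
    (hcard : ∀ (i : Fin k) (S : Finset V), S ⊆ nbhd G (A i) →
      S.card ≤ (crossEdges G (A i) S).card) :
    ∑ B ∈ Fintype.piFinset (fun i => (nbhd G (A i)).powerset),
        (∏ i, lam ^ (B i).card) *
          q ^ ((Finset.univ.biUnion fun i => crossEdges G (A i) (B i)).card)
      ≤ ∏ i, (((1 + ((1+lam)^k - 1) * q) ^ (nbhd G (A i)).card : ℝ)) ^ ((1:ℝ)/k) := by
  classical
  have ht0 : (0:ℝ) < 1 + lam := by linarith
  set F : Finset (Sym2 V) := edgeFins G with hFdef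
  set w : Finset (Sym2 V) → ℝ := fun η => (1 - q) ^ η.card * q ^ (F.card - η.card) with hwdef
  have hwnn : ∀ η, 0 ≤ w η := fun η =>
    mul_nonneg (pow_nonneg (by linarith) _) (pow_nonneg hq0.le _)
  set good : Fin k → Finset (Sym2 V) → Finset V :=
    fun i η => (nbhd G (A i)).filter fun v => crossEdges G (A i) {v} ∩ η = ∅ with hgdef
  have hgood_sub : ∀ i η, good i η ⊆ nbhd G (A i) := fun i η => Finset.filter_subset _ _
  have hsubgood : ∀ (i : Fin k) (η : Finset (Sym2 V)) (B : Finset V),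
      B ⊆ nbhd G (A i) → (crossEdges G (A i) B ∩ η = ∅ ↔ B ⊆ good i η) := by
    intro i η B hB
    rw [aux_cross_biUnion, aux_biUnion_inter_empty]
    constructor
    · intro h v hv
      simp only [hgdef, Finset.mem_filter]
      exact ⟨hB hv, h v hv⟩
    · intro h v hv
      have := h hv
      simp only [hgdef, Finset.mem_filter] at this
      exact this.2
  have hcrossF : ∀ (X B : Finset V), crossEdges G X B ⊆ F :=
    fun X B => aux_crossEdges_subset G X B
  have hUsub : ∀ B : Fin k → Finset V,
      (Finset.univ.biUnion fun i => crossEdges G (A i) (B i)) ⊆ F := by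
    intro B
    apply Finset.biUnion_subset.mpr
    intro i _
    exact hcrossF _ _
  -- Step 1: rewrite the sum via the random sparsification identity
  have e1 : ∑ B ∈ Fintype.piFinset (fun i => (nbhd G (A i)).powerset),
        (∏ i, lam ^ (B i).card) *
          q ^ ((Finset.univ.biUnion fun i => crossEdges G (A i) (B i)).card)
      = ∑ η ∈ F.powerset, w η * ∏ i, (1+lam) ^ (good i η).card := by
    have step1 : ∀ B ∈ Fintype.piFinset (fun i => (nbhd G (A i)).powerset),
        (∏ i, lam ^ (B i).card) *
          q ^ ((Finset.univ.biUnion fun i => crossEdges G (A i) (B i)).card)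
        = ∑ η ∈ F.powerset, (∏ i, lam ^ (B i).card) * (w η *
            (if (Finset.univ.biUnion fun i => crossEdges G (A i) (B i)) ∩ η = ∅
              then (1:ℝ) else 0)) := by
      intro B _
      rw [← aux_qpow F _ (hUsub B) q, Finset.mul_sum]
    rw [Finset.sum_congr rfl step1, Finset.sum_comm]
    apply Finset.sum_congr rfl
    intro η _
    calc ∑ B ∈ Fintype.piFinset (fun i => (nbhd G (A i)).powerset),
          (∏ i, lam ^ (B i).card) * (w η *
            (if (Finset.univ.biUnion fun i => crossEdges G (A i) (B i)) ∩ η = ∅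
              then (1:ℝ) else 0))
        = ∑ B ∈ Fintype.piFinset (fun i => (nbhd G (A i)).powerset),
            w η * ∏ i, (lam ^ (B i).card *
              (if crossEdges G (A i) (B i) ∩ η = ∅ then (1:ℝ) else 0)) := by
          apply Finset.sum_congr rfl
          intro B _
          rw [Finset.prod_mul_distrib]
          have hiff := aux_biUnion_inter_empty Finset.univ
            (fun i => crossEdges G (A i) (B i)) η
          by_cases hall : ∀ i ∈ Finset.univ, crossEdges G (A i) (B i) ∩ η = ∅
          · rw [if_pos (hiff.mpr hall),
              Finset.prod_congr rfl (fun i hi => if_pos (hall i hi)),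
              Finset.prod_const_one]
            ring
          · rw [if_neg (fun h => hall (hiff.mp h))]
            push_neg at hall
            obtain ⟨i, hi, hne⟩ := hall
            rw [Finset.prod_eq_zero
              (f := fun x => if crossEdges G (A x) (B x) ∩ η = ∅ then (1:ℝ) else 0)
              hi (if_neg (Finset.nonempty_iff_ne_empty.mp hne))]
            ring
      _ = w η * ∑ B ∈ Fintype.piFinset (fun i => (nbhd G (A i)).powerset),
            ∏ i, (lam ^ (B i).card *
              (if crossEdges G (A i) (B i) ∩ η = ∅ then (1:ℝ) else 0)) :=
          (Finset.mul_sum _ _ _).symm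
      _ = w η * ∏ i, ∑ Bi ∈ (nbhd G (A i)).powerset,
            lam ^ Bi.card * (if crossEdges G (A i) Bi ∩ η = ∅ then (1:ℝ) else 0) := by
          have hps := Finset.prod_univ_sum (fun i => (nbhd G (A i)).powerset)
            (fun i Bi => lam ^ Bi.card *
              (if crossEdges G (A i) Bi ∩ η = ∅ then (1:ℝ) else 0))
          rw [← hps]
      _ = w η * ∏ i, (1+lam) ^ (good i η).card := by
          congr 1
          apply Finset.prod_congr rfl
          intro i _
          have h1 : ∀ Bi ∈ (nbhd G (A i)).powerset,
              lam ^ Bi.card * (if crossEdges G (A i) Bi ∩ η = ∅ then (1:ℝ) else 0)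
              = if Bi ⊆ good i η then lam ^ Bi.card else 0 := by
            intro Bi hBi
            rw [Finset.mem_powerset] at hBi
            by_cases hc : Bi ⊆ good i η
            · rw [if_pos hc, if_pos ((hsubgood i η Bi hBi).mpr hc), mul_one]
            · rw [if_neg hc, if_neg (fun h => hc ((hsubgood i η Bi hBi).mp h)), mul_zero]
          rw [Finset.sum_congr rfl h1, ← Finset.sum_filter]
          have h2 : (nbhd G (A i)).powerset.filter (fun Bi => Bi ⊆ good i η)
              = (good i η).powerset := by
            ext Bi
            simp only [Finset.mem_filter, Finset.mem_powerset]
            exact ⟨fun h => h.2, fun h => ⟨h.trans (hgood_sub i η), h⟩⟩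
          rw [h2]
          have h3 : ∀ Bi ∈ (good i η).powerset, lam ^ Bi.card
              = lam ^ Bi.card * (1:ℝ) ^ ((good i η).card - Bi.card) := by
            intro Bi _
            rw [one_pow, mul_one]
          rw [Finset.sum_congr rfl h3, aux_binom, add_comm]
  -- Step 2: the moment bound for each i
  have e3 : ∀ i : Fin k, ∑ η ∈ F.powerset, w η * ((1+lam) ^ (good i η).card) ^ k
      ≤ (1 + ((1+lam)^k - 1) * q) ^ (nbhd G (A i)).card := by
    intro i
    have hr1 : (1:ℝ) ≤ (1+lam)^k := one_le_pow₀ (by linarith)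
    have hexpand : ∀ η, ((1+lam)^k) ^ (good i η).card
        = ∑ S ∈ (nbhd G (A i)).powerset,
            (if S ⊆ good i η then ((1+lam)^k - 1) ^ S.card else 0) := by
      intro η
      have h1 : ∀ S ∈ (nbhd G (A i)).powerset,
          (if S ⊆ good i η then ((1+lam)^k - 1) ^ S.card else 0)
          = (∏ v ∈ S, (if v ∈ good i η then ((1+lam)^k - 1) else 0)) *
              ∏ _v ∈ (nbhd G (A i)) \ S, (1:ℝ) := by
        intro S hS
        rw [Finset.prod_const_one, mul_one]
        by_cases hSg : S ⊆ good i η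
        · rw [if_pos hSg, Finset.prod_congr rfl (fun v hv => if_pos (hSg hv)),
            Finset.prod_const]
        · rw [if_neg hSg]
          obtain ⟨v, hvS, hvg⟩ := Finset.not_subset.mp hSg
          exact (Finset.prod_eq_zero
            (f := fun u => if u ∈ good i η then ((1+lam)^k - 1) else (0:ℝ))
            hvS (if_neg hvg)).symm
      rw [Finset.sum_congr rfl h1, ← Finset.prod_add]
      have h2 : ∀ v ∈ nbhd G (A i),
          ((if v ∈ good i η then ((1+lam)^k - 1) else 0) + 1)
          = (if v ∈ good i η then (1+lam)^k else 1) := by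
        intro v _
        split <;> ring
      rw [Finset.prod_congr rfl h2]
      have h3 : ∏ v ∈ nbhd G (A i), (if v ∈ good i η then (1+lam)^k else (1:ℝ))
          = ∏ v ∈ good i η, (if v ∈ good i η then (1+lam)^k else (1:ℝ)) :=
        (Finset.prod_subset (hgood_sub i η) (fun v _ hv => if_neg hv)).symm
      rw [h3, Finset.prod_congr rfl (fun v hv => if_pos hv), Finset.prod_const]
    calc ∑ η ∈ F.powerset, w η * ((1+lam) ^ (good i η).card) ^ k
        = ∑ η ∈ F.powerset, ∑ S ∈ (nbhd G (A i)).powerset,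
            ((1+lam)^k - 1) ^ S.card * (w η *
              (if crossEdges G (A i) S ∩ η = ∅ then (1:ℝ) else 0)) := by
          apply Finset.sum_congr rfl
          intro η hη
          rw [← pow_mul, mul_comm (good i η).card k, pow_mul, hexpand η, Finset.mul_sum]
          apply Finset.sum_congr rfl
          intro S hS
          rw [Finset.mem_powerset] at hS
          by_cases hc : S ⊆ good i η
          · rw [if_pos hc, if_pos ((hsubgood i η S hS).mpr hc)]
            ring
          · rw [if_neg hc, if_neg (fun h => hc ((hsubgood i η S hS).mp h))]
            ring
      _ = ∑ S ∈ (nbhd G (A i)).powerset,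
            ((1+lam)^k - 1) ^ S.card * q ^ (crossEdges G (A i) S).card := by
          rw [Finset.sum_comm]
          apply Finset.sum_congr rfl
          intro S _
          rw [← Finset.mul_sum]
          congr 1
          have := aux_qpow F (crossEdges G (A i) S) (hcrossF _ _) q
          rw [← this]
      _ ≤ ∑ S ∈ (nbhd G (A i)).powerset,
            ((1+lam)^k - 1) ^ S.card * q ^ S.card := by
          apply Finset.sum_le_sum
          intro S hS
          rw [Finset.mem_powerset] at hS
          apply mul_le_mul_of_nonneg_left _ (pow_nonneg (by linarith) _)
          exact pow_le_pow_of_le_one hq0.le hq1 (hcard i S hS)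
      _ = ∑ S ∈ (nbhd G (A i)).powerset,
            (((1+lam)^k - 1) * q) ^ S.card *
              (1:ℝ) ^ ((nbhd G (A i)).card - S.card) := by
          apply Finset.sum_congr rfl
          intro S _
          rw [mul_pow, one_pow, mul_one]
      _ = (((1+lam)^k - 1) * q + 1) ^ (nbhd G (A i)).card := aux_binom _ _ _
      _ = (1 + ((1+lam)^k - 1) * q) ^ (nbhd G (A i)).card := by ring_nf
  -- Step 3: Hölder
  have e2 := aux_holder F.powerset k hk w
    (fun i η => (1+lam) ^ (good i η).card)
    (fun η _ => hwnn η)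
    (fun i η _ => pow_nonneg ht0.le _)
  rw [e1]
  refine le_trans e2 ?_
  apply Finset.prod_le_prod
  · intro i _
    apply Real.rpow_nonneg
    apply Finset.sum_nonneg
    intro η _
    exact mul_nonneg (hwnn η) (pow_nonneg (pow_nonneg ht0.le _) _)
  · intro i _
    apply Real.rpow_le_rpow _ (e3 i) (by positivity)
    apply Finset.sum_nonneg
    intro η _
    exact mul_nonneg (hwnn η) (pow_nonneg (pow_nonneg ht0.le _) _)

theorem statement15 (d k : ℕ) (hd : 1 ≤ d) (hk : 1 ≤ k) (lam beta : ℝ)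
    (hlam : 0 < lam) (hbeta : 0 ≤ beta)
    (A : Fin k → Finset (Fin d → Bool)) (hA : IsPolymer d k A) :
    polymerWeight d k lam beta A ≤
      lam ^ (∑ i, (A i).card) *
        (((1 + ((1 + lam) ^ k - 1) * Real.exp (-beta)) / (1 + lam) ^ k) ^ ((1 : ℝ) / k))
          ^ (∑ i, (nbhd (hypercube d) (A i)).card) := by
  classical
  obtain ⟨hAside, -, -⟩ := hA
  have hq0 : 0 < Real.exp (-beta) := Real.exp_pos _
  have hq1 : Real.exp (-beta) ≤ 1 := Real.exp_le_one_iff.mpr (by linarith)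
  have ht0 : (0:ℝ) < 1 + lam := by linarith
  have hcard : ∀ (i : Fin k) (S : Finset (Fin d → Bool)), S ⊆ nbhd (hypercube d) (A i) →
      S.card ≤ (crossEdges (hypercube d) (A i) S).card :=
    fun i S hS => aux_cross_card (A i) S (hAside i) hS
  have hmain := aux_main (hypercube d) k hk lam (Real.exp (-beta)) hlam hq0 hq1 A hcard
  have hc0 : (0:ℝ) < 1 + ((1+lam)^k - 1) * Real.exp (-beta) := by
    have h1 : (1:ℝ) ≤ (1+lam)^k := one_le_pow₀ (by linarith)
    nlinarith
  have hexp : ∀ m : ℕ, Real.exp (-beta * m) = Real.exp (-beta) ^ m := by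
    intro m
    rw [show -beta * (m:ℝ) = (m:ℝ) * (-beta) by ring, Real.exp_nat_mul]
  have hdom : (Finset.univ : Finset (Fin k → Finset (Fin d → Bool))).filter
      (fun B => ∀ i, B i ⊆ nbhd (hypercube d) (A i))
      = Fintype.piFinset (fun i => (nbhd (hypercube d) (A i)).powerset) := by
    ext B
    simp [Fintype.mem_piFinset]
  have hPW : polymerWeight d k lam beta A
      = lam ^ (∑ i, (A i).card) / (1+lam) ^ (∑ i, (nbhd (hypercube d) (A i)).card)
        * ∑ B ∈ Fintype.piFinset (fun i => (nbhd (hypercube d) (A i)).powerset),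
            (∏ i, lam ^ (B i).card) *
              Real.exp (-beta) ^ ((Finset.univ.biUnion fun i =>
                crossEdges (hypercube d) (A i) (B i)).card) := by
    unfold polymerWeight
    rw [hdom, Finset.mul_sum]
    apply Finset.sum_congr rfl
    intro B _
    have hprodB := Finset.prod_pow_eq_pow_sum Finset.univ (fun i => (B i).card) lam
    rw [hprodB, hexp, pow_add]
    ring
  rw [hPW]
  have hpos : (0:ℝ) ≤ lam ^ (∑ i, (A i).card) /
      (1+lam) ^ (∑ i, (nbhd (hypercube d) (A i)).card) := by positivity
  refine le_trans (mul_le_mul_of_nonneg_left hmain hpos) (le_of_eq ?_)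
  set c : ℝ := 1 + ((1+lam)^k - 1) * Real.exp (-beta) with hcdef
  set n : ℕ := ∑ i, (nbhd (hypercube d) (A i)).card with hndef
  have h1 : ∀ i : Fin k, ((c ^ (nbhd (hypercube d) (A i)).card : ℝ)) ^ ((1:ℝ)/k)
      = c ^ ((((nbhd (hypercube d) (A i)).card : ℕ) : ℝ) * ((1:ℝ)/k)) := by
    intro i
    rw [← Real.rpow_natCast c ((nbhd (hypercube d) (A i)).card), ← Real.rpow_mul hc0.le]
  rw [Finset.prod_congr rfl (fun i _ => h1 i), ← Real.rpow_sum_of_pos hc0]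
  have h2 : ∑ i : Fin k, ((((nbhd (hypercube d) (A i)).card : ℕ) : ℝ) * ((1:ℝ)/k))
      = (n:ℝ) * ((1:ℝ)/k) := by
    rw [← Finset.sum_mul, hndef]
    push_cast
    ring
  rw [h2]
  have hk0 : (k:ℝ) ≠ 0 := by
    have : 0 < k := hk
    positivity
  have h3 : ((c / (1+lam)^k) ^ ((1:ℝ)/k)) ^ n = c ^ ((n:ℝ) * ((1:ℝ)/k)) / (1+lam) ^ n := by
    rw [← Real.rpow_natCast ((c / (1+lam)^k) ^ ((1:ℝ)/k)) n,
      ← Real.rpow_mul (by positivity), Real.div_rpow hc0.le (by positivity),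
      show (1:ℝ)/k * (n:ℕ) = (n:ℝ) * ((1:ℝ)/k) by ring]
    congr 1
    rw [← Real.rpow_natCast (1+lam) k, ← Real.rpow_mul ht0.le,
      show (k:ℝ) * ((n:ℝ) * ((1:ℝ)/k)) = ((n:ℕ):ℝ) by
        rw [mul_comm ((n:ℝ)) ((1:ℝ)/k), ← mul_assoc, mul_one_div, div_self hk0, one_mul],
      Real.rpow_natCast]
  rw [h3]
  ring
end
end

section
/- Fix p ∈ (0,1) and c > 0, and for x > 0 set α_x := 1 − p(1 − e^{−cx}). Then the function x ↦ α_x^{1/x} is increasing on (0,∞). -/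
open Real

theorem statement17 (p c : ℝ) (hp0 : 0 < p) (hp1 : p < 1) (hc : 0 < c) :
    StrictMonoOn (fun x : ℝ => (1 - p * (1 - Real.exp (-c * x))) ^ (1 / x))
      (Set.Ioi (0 : ℝ)) := by
  have h1p : 0 < 1 - p := by linarith
  set g : ℝ → ℝ := fun t => (1 - p) + p * Real.exp (-c * t) with hgdef
  have hgpos : ∀ t, 0 < g t := fun t =>
    add_pos h1p (mul_pos hp0 (Real.exp_pos _))
  set φ : ℝ → ℝ := fun t => Real.log (g t) with hφdef
  have hlin : ∀ t : ℝ, HasDerivAt (fun t : ℝ => -c * t) (-c) t := by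
    intro t
    simpa using (hasDerivAt_id t).const_mul (-c)
  have hgd : ∀ t, HasDerivAt g (p * (Real.exp (-c * t) * (-c))) t := by
    intro t
    exact (((hlin t).exp).const_mul p).const_add (1 - p)
  have hφd : ∀ t, HasDerivAt φ (p * (Real.exp (-c * t) * (-c)) / g t) t := by
    intro t
    exact (hgd t).log (hgpos t).ne'
  set φ' : ℝ → ℝ := fun t => p * (Real.exp (-c * t) * (-c)) / g t with hφ'def
  have hderivφ : deriv φ = φ' := by
    funext t; exact (hφd t).deriv
  have hnum : ∀ t, HasDerivAt (fun t => p * (Real.exp (-c * t) * (-c)))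
      (p * (Real.exp (-c * t) * (-c) * (-c))) t := by
    intro t
    exact (((hlin t).exp).mul_const (-c)).const_mul p
  have hφ'd : ∀ t, HasDerivAt φ'
      ((p * (Real.exp (-c * t) * (-c) * (-c)) * g t -
        p * (Real.exp (-c * t) * (-c)) * (p * (Real.exp (-c * t) * (-c)))) / g t ^ 2) t := by
    intro t
    exact (hnum t).div (hgd t) (hgpos t).ne'
  have hconv : StrictConvexOn ℝ Set.univ φ := by
    apply strictConvexOn_univ_of_deriv2_pos
    · have : Continuous g := by
        apply Continuous.add continuous_const
        exact continuous_const.mul (Real.continuous_exp.comp (continuous_const.mul continuous_id))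
      exact this.log fun t => (hgpos t).ne'
    · intro t
      have : deriv^[2] φ t = deriv φ' t := by
        simp [Function.iterate_succ, hderivφ]
      rw [this, (hφ'd t).deriv]
      have he : 0 < Real.exp (-c * t) := Real.exp_pos _
      have hnum' : p * (Real.exp (-c * t) * (-c) * (-c)) * g t -
          p * (Real.exp (-c * t) * (-c)) * (p * (Real.exp (-c * t) * (-c)))
          = c ^ 2 * p * (1 - p) * Real.exp (-c * t) := by
        simp only [hgdef]; ring
      rw [hnum']
      positivity
  have hφ0 : φ 0 = 0 := by simp [hφdef, hgdef]
  intro x hx y hy hxy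
  simp only [Set.mem_Ioi] at hx hy
  have key : φ x / x < φ y / y := by
    have hb : 0 < x / y := div_pos hx (by linarith)
    have hb1 : x / y < 1 := (div_lt_one (by linarith)).mpr hxy
    have ha : 0 < 1 - x / y := by linarith
    have hcomb := hconv.2 (Set.mem_univ (0 : ℝ)) (Set.mem_univ y)
      (by intro h; exact absurd h.symm (ne_of_gt (lt_trans hx hxy)))
      ha hb (by ring)
    have hx' : (1 - x / y) • (0 : ℝ) + (x / y) • y = x := by
      simp only [smul_eq_mul, mul_zero, zero_add]; exact div_mul_cancel₀ x hy.ne'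
    rw [hx', hφ0] at hcomb
    have hcomb' : φ x < x / y * φ y := by
      simpa using hcomb
    rw [div_lt_div_iff₀ hx (lt_trans hx hxy)]
    calc φ x * y < x / y * φ y * y := by nlinarith
      _ = φ y * x := by field_simp
  have hrw : ∀ t : ℝ, 1 - p * (1 - Real.exp (-c * t)) = g t := by
    intro t; simp only [hgdef]; ring
  simp only [hrw]
  rw [Real.rpow_def_of_pos (hgpos x), Real.rpow_def_of_pos (hgpos y)]
  apply Real.exp_lt_exp.mpr
  calc Real.log (g x) * (1 / x) = φ x / x := by rw [mul_one_div]
    _ < φ y / y := key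
    _ = Real.log (g y) * (1 / y) := by rw [mul_one_div]
end

section
/- Fix p ∈ (0,1) and c > 0, and for x > 0 set α_x := 1 − p(1 − e^{−cx}) and f(x) := (2α_x)^{1/x}. If p ≤ 1/2, then f is strictly decreasing on (0,∞). If p > 1/2, then there exists x* ∈ (0,∞) such that f is strictly decreasing on (0, x*] and strictly increasing on [x*, ∞). -/
open Real Set Filter Topology

namespace St18

noncomputable def A (p c x : ℝ) : ℝ := 2 * (1 - p * (1 - Real.exp (-c * x)))

noncomputable def phi (p c x : ℝ) : ℝ :=
  (-2 * c * p) * (x * Real.exp (-c * x)) / A p c x - Real.log (A p c x)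

noncomputable def G (p c x : ℝ) : ℝ := Real.log (A p c x) * x⁻¹

variable {p c : ℝ}

lemma A_pos (hp0 : 0 < p) (hp1 : p < 1) (x : ℝ) : 0 < A p c x := by
  have h := Real.exp_pos (-c * x)
  unfold A; nlinarith

lemma E_deriv (c x : ℝ) : HasDerivAt (fun x => Real.exp (-c * x)) (-c * Real.exp (-c * x)) x := by
  have h1 : HasDerivAt (fun x : ℝ => -c * x) (-c) x := by
    simpa using (hasDerivAt_id x).const_mul (-c)
  simpa [mul_comm] using h1.exp

lemma A_deriv (p c : ℝ) (x : ℝ) :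
    HasDerivAt (A p c) (-2 * c * p * Real.exp (-c * x)) x := by
  have h := (((E_deriv c x).const_sub 1).const_mul p).const_sub 1 |>.const_mul 2
  refine h.congr_deriv ?_
  ring

lemma phi_deriv (hp0 : 0 < p) (hp1 : p < 1) (x : ℝ) :
    HasDerivAt (phi p c)
      (4 * c ^ 2 * p * (1 - p) * x * Real.exp (-c * x) / (A p c x) ^ 2) x := by
  have hA := A_pos (c := c) hp0 hp1 x
  have hN : HasDerivAt (fun x => (-2 * c * p) * (x * Real.exp (-c * x)))
      ((-2 * c * p) * (1 * Real.exp (-c * x) + x * (-c * Real.exp (-c * x)))) x :=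
    ((hasDerivAt_id x).mul (E_deriv c x)).const_mul _
  have hdiv := hN.div (A_deriv p c x) hA.ne'
  have hlog := (A_deriv p c x).log hA.ne'
  have h := hdiv.sub hlog
  refine h.congr_deriv ?_
  have hB := Real.exp_pos (-c * x)
  field_simp
  unfold A
  ring

lemma G_deriv (hp0 : 0 < p) (hp1 : p < 1) {x : ℝ} (hx : x ≠ 0) :
    HasDerivAt (G p c) (phi p c x / x ^ 2) x := by
  have hA := A_pos (c := c) hp0 hp1 x
  have hlog := (A_deriv p c x).log hA.ne'
  have hinv : HasDerivAt (fun x : ℝ => x⁻¹) (-(x ^ 2)⁻¹) x := hasDerivAt_inv hx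
  have h := hlog.mul hinv
  refine h.congr_deriv ?_
  unfold phi
  field_simp
  ring

lemma phi_zero : phi p c 0 = -Real.log 2 := by
  simp [phi, A]

lemma phi_strictMono (hp0 : 0 < p) (hp1 : p < 1) (hc : 0 < c) :
    StrictMonoOn (phi p c) (Ici 0) := by
  apply strictMonoOn_of_deriv_pos (convex_Ici 0)
  · exact fun x _ => (phi_deriv hp0 hp1 x).continuousAt.continuousWithinAt
  · intro x hx
    rw [interior_Ici] at hx
    rw [(phi_deriv hp0 hp1 x).deriv]
    have h1p : 0 < 1 - p := by linarith
    have hB := Real.exp_pos (-c * x)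
    have hA := A_pos (c := c) hp0 hp1 x
    have hnum : 0 < 4 * c ^ 2 * p * (1 - p) * x * Real.exp (-c * x) := by
      have h4 : (0:ℝ) < 4 * c ^ 2 := by positivity
      exact mul_pos (mul_pos (mul_pos (mul_pos h4 hp0) h1p) hx) hB
    exact div_pos hnum (by positivity)

end St18

namespace St18
variable {p c : ℝ}

lemma E_lim (hc : 0 < c) : Tendsto (fun x => Real.exp (-c * x)) atTop (𝓝 0) := by
  have h1 : Tendsto (fun x : ℝ => -c * x) atTop atBot := by
    have := (tendsto_id (α := ℝ)).const_mul_atTop hc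
    simpa [neg_mul] using tendsto_neg_atBot_iff.mpr this
  exact Real.tendsto_exp_atBot.comp h1

lemma xE_lim (hc : 0 < c) : Tendsto (fun x => x * Real.exp (-c * x)) atTop (𝓝 0) := by
  have h0 : Tendsto (fun y : ℝ => y * Real.exp (-y)) atTop (𝓝 0) := by
    simpa using tendsto_pow_mul_exp_neg_atTop_nhds_zero 1
  have h1 : Tendsto (fun x : ℝ => c * x) atTop atTop :=
    (tendsto_id (α := ℝ)).const_mul_atTop hc
  have h2 : Tendsto (fun x : ℝ => (c * x) * Real.exp (-(c * x))) atTop (𝓝 0) := h0.comp h1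
  have h3 := h2.const_mul (1 / c)
  simp only [mul_zero] at h3
  refine h3.congr (fun x => ?_)
  rw [neg_mul]
  field_simp

lemma A_lim (hc : 0 < c) : Tendsto (A p c) atTop (𝓝 (2 * (1 - p))) := by
  have h := (((E_lim hc).const_sub 1).const_mul p).const_sub 1 |>.const_mul 2
  rw [show (2:ℝ) * (1 - p) = 2 * (1 - p * (1 - 0)) by ring]
  exact h

lemma phi_lim (hp0 : 0 < p) (hp1 : p < 1) (hc : 0 < c) :
    Tendsto (phi p c) atTop (𝓝 (-Real.log (2 * (1 - p)))) := by
  have hL : (0:ℝ) < 2 * (1 - p) := by linarith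
  have t1 : Tendsto (fun x => (-2 * c * p) * (x * Real.exp (-c * x)) / A p c x) atTop
      (𝓝 ((-2 * c * p) * 0 / (2 * (1 - p)))) :=
    (((xE_lim hc).const_mul _).div (A_lim hc) hL.ne')
  have t2 : Tendsto (fun x => Real.log (A p c x)) atTop (𝓝 (Real.log (2 * (1 - p)))) :=
    (Real.continuousAt_log hL.ne').tendsto.comp (A_lim hc)
  have h := t1.sub t2
  rw [show -Real.log (2 * (1 - p)) =
      (-2 * c * p) * 0 / (2 * (1 - p)) - Real.log (2 * (1 - p)) by ring]
  exact h

lemma phi_neg_of_le (hp0 : 0 < p) (hp : p ≤ 1 / 2) (hc : 0 < c) {x : ℝ} (hx : 0 < x) :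
    phi p c x < 0 := by
  have hp1 : p < 1 := by linarith
  have hA := A_pos (c := c) hp0 hp1 x
  have hB := Real.exp_pos (-c * x)
  have hB1 : Real.exp (-c * x) < 1 := by
    rw [Real.exp_lt_one_iff]
    nlinarith
  have hA1 : 1 < A p c x := by unfold A; nlinarith
  have hlog : 0 < Real.log (A p c x) := Real.log_pos hA1
  have ht1 : (-2 * c * p) * (x * Real.exp (-c * x)) / A p c x < 0 := by
    apply div_neg_of_neg_of_pos _ hA
    have : 0 < (2 * c * p) * (x * Real.exp (-c * x)) := by positivity
    nlinarith
  unfold phi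
  linarith

lemma exists_root (hp1 : p < 1) (hp : 1 / 2 < p) (hc : 0 < c) :
    ∃ xs : ℝ, 0 < xs ∧ phi p c xs = 0 := by
  have hp0 : 0 < p := by linarith
  have hL : 0 < -Real.log (2 * (1 - p)) := by
    have h1 : (0:ℝ) < 2 * (1 - p) := by linarith
    have h2 : 2 * (1 - p) < 1 := by linarith
    have := Real.log_neg h1 h2
    linarith
  have hev := ((phi_lim hp0 hp1 hc).eventually (eventually_gt_nhds hL)).and
    (eventually_gt_atTop (0:ℝ))
  obtain ⟨X, hXφ, hX0⟩ := hev.exists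
  have hcont : ContinuousOn (phi p c) (Icc 0 X) :=
    fun x _ => (phi_deriv hp0 hp1 x).continuousAt.continuousWithinAt
  have hmem : (0:ℝ) ∈ Icc (phi p c 0) (phi p c X) := by
    constructor
    · rw [phi_zero]
      have := Real.log_pos (by norm_num : (1:ℝ) < 2)
      linarith
    · linarith
  obtain ⟨xs, hxs, hroot⟩ := intermediate_value_Icc hX0.le hcont hmem
  refine ⟨xs, ?_, hroot⟩
  rcases lt_or_eq_of_le hxs.1 with h | h
  · exact h
  · exfalso
    rw [← h] at hroot
    rw [phi_zero] at hroot
    have := Real.log_pos (by norm_num : (1:ℝ) < 2)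
    linarith

end St18

namespace St18
variable {p c : ℝ}

lemma f_eq (hp0 : 0 < p) (hp1 : p < 1) {x : ℝ} (hx : 0 < x) :
    (2 * (1 - p * (1 - Real.exp (-c * x)))) ^ (1 / x) = Real.exp (G p c x) := by
  unfold G
  rw [show (2 * (1 - p * (1 - Real.exp (-c * x)))) = A p c x from rfl,
    Real.rpow_def_of_pos (A_pos (c := c) hp0 hp1 x), one_div]

lemma G_anti_of_phi_neg (hp0 : 0 < p) (hp1 : p < 1) {s : Set ℝ}
    (hconv : Convex ℝ s) (hs : s ⊆ Ioi 0)
    (hneg : ∀ x ∈ interior s, phi p c x < 0) :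
    StrictAntiOn (G p c) s := by
  apply strictAntiOn_of_deriv_neg hconv
  · exact fun x hx => (G_deriv hp0 hp1 (hs hx).out.ne').continuousAt.continuousWithinAt
  · intro x hx
    have hx0 : x ≠ 0 := ((hs (interior_subset hx)).out).ne'
    rw [(G_deriv hp0 hp1 hx0).deriv]
    exact div_neg_of_neg_of_pos (hneg x hx) (by positivity)

end St18

open St18 in
theorem statement18 (p c : ℝ) (hp0 : 0 < p) (hp1 : p < 1) (hc : 0 < c) :
    (p ≤ 1 / 2 →
      StrictAntiOn (fun x : ℝ => (2 * (1 - p * (1 - Real.exp (-c * x)))) ^ (1 / x))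
        (Set.Ioi (0 : ℝ))) ∧
    (1 / 2 < p →
      ∃ xs : ℝ, 0 < xs ∧
        StrictAntiOn (fun x : ℝ => (2 * (1 - p * (1 - Real.exp (-c * x)))) ^ (1 / x))
          (Set.Ioc (0 : ℝ) xs) ∧
        StrictMonoOn (fun x : ℝ => (2 * (1 - p * (1 - Real.exp (-c * x)))) ^ (1 / x))
          (Set.Ici xs)) := by
  constructor
  · intro hp
    have hGanti : StrictAntiOn (G p c) (Ioi 0) := by
      apply G_anti_of_phi_neg hp0 hp1 (convex_Ioi 0) (subset_refl _)
      intro x hx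
      rw [interior_Ioi] at hx
      exact phi_neg_of_le hp0 hp hc hx.out
    intro x hx y hy hxy
    simp only
    rw [f_eq hp0 hp1 hx.out, f_eq hp0 hp1 hy.out]
    exact Real.exp_lt_exp.mpr (hGanti hx hy hxy)
  · intro hp
    obtain ⟨xs, hxs0, hroot⟩ := exists_root hp1 hp hc
    have hmono := phi_strictMono hp0 hp1 hc
    refine ⟨xs, hxs0, ?_, ?_⟩
    · have hGanti : StrictAntiOn (G p c) (Ioc 0 xs) := by
        apply G_anti_of_phi_neg hp0 hp1 (convex_Ioc 0 xs) Ioc_subset_Ioi_self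
        intro x hx
        rw [interior_Ioc] at hx
        have := hmono (le_of_lt hx.1) (mem_Ici.mpr hxs0.le) hx.2
        linarith [hroot ▸ this]
      intro x hx y hy hxy
      simp only
      rw [f_eq hp0 hp1 hx.1, f_eq hp0 hp1 hy.1]
      exact Real.exp_lt_exp.mpr (hGanti hx hy hxy)
    · have hGmono : StrictMonoOn (G p c) (Ici xs) := by
        apply strictMonoOn_of_deriv_pos (convex_Ici xs)
        · intro x hx
          have hx0 : x ≠ 0 := by
            have : xs ≤ x := hx
            exact (lt_of_lt_of_le hxs0 this).ne'
          exact (G_deriv hp0 hp1 hx0).continuousAt.continuousWithinAt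
        · intro x hx
          rw [interior_Ici] at hx
          have hxpos : 0 < x := lt_trans hxs0 hx
          rw [(G_deriv hp0 hp1 hxpos.ne').deriv]
          have hphi : 0 < phi p c x := by
            have := hmono (mem_Ici.mpr hxs0.le) (mem_Ici.mpr (hxs0.trans hx).le) hx
            linarith [hroot ▸ this]
          exact div_pos hphi (by positivity)
      intro x hx y hy hxy
      simp only
      have hxpos : 0 < x := lt_of_lt_of_le hxs0 hx
      have hypos : 0 < y := lt_of_lt_of_le hxs0 hy
      rw [f_eq hp0 hp1 hxpos, f_eq hp0 hp1 hypos]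
      exact Real.exp_lt_exp.mpr (hGmono hx hy hxy)
end

section
/- Fix p ∈ (0,1) and c > 0, and for x > 0 set α_x := 1 − p(1 − e^{−cx}) and f(x) := (2α_x)^{1/x}. Then for every integer n ≥ 1 and all reals x' ≥ x₁, …, x_n ≥ x > 0, ∏_{i=1}^{n} (2α_{x_i}) ≤ (max{f(x), f(x')})^{x₁+⋯+x_n}. -/
open Real Set

private lemma conv_aux (a b c : ℝ) (ha : 0 < a) (hb : 0 < b) (hc : 0 < c) :
    ConvexOn ℝ Set.univ (fun t : ℝ => Real.log (a + b * Real.exp (-c * t))) := by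
  have hu : ∀ t : ℝ, 0 < a + b * Real.exp (-c * t) := fun t =>
    add_pos ha (mul_pos hb (Real.exp_pos _))
  have hd : ∀ t : ℝ, HasDerivAt (fun t : ℝ => Real.log (a + b * Real.exp (-c * t)))
      ((b * (Real.exp (-c * t) * -c)) / (a + b * Real.exp (-c * t))) t := by
    intro t
    have h1 : HasDerivAt (fun t : ℝ => -c * t) (-c) t := by
      simpa using (hasDerivAt_id t).const_mul (-c)
    have h4 := ((h1.exp.const_mul b).const_add a)
    exact h4.log (ne_of_gt (hu t))
  have hdiff : Differentiable ℝ (fun t : ℝ => Real.log (a + b * Real.exp (-c * t))) :=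
    fun t => (hd t).differentiableAt
  refine Monotone.convexOn_univ_of_deriv hdiff ?_
  intro s t hst
  rw [(hd s).deriv, (hd t).deriv]
  have hes : Real.exp (-c * t) ≤ Real.exp (-c * s) := by
    apply Real.exp_le_exp.2; nlinarith
  rw [div_le_div_iff₀ (hu s) (hu t)]
  nlinarith [mul_nonneg (mul_nonneg (mul_nonneg hc.le hb.le) ha.le)
      (sub_nonneg.2 hes), Real.exp_pos (-c * s), Real.exp_pos (-c * t)]

private lemma ptwise (a b c : ℝ) (ha : 0 < a) (hb : 0 < b) (hc : 0 < c)
    (x x' t : ℝ) (hx : 0 < x) (h1 : x ≤ t) (h2 : t ≤ x') :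
    a + b * Real.exp (-c * t) ≤
      (max ((a + b * Real.exp (-c * x)) ^ (1 / x))
        ((a + b * Real.exp (-c * x')) ^ (1 / x'))) ^ t := by
  have hu : ∀ y : ℝ, 0 < a + b * Real.exp (-c * y) := fun y =>
    add_pos ha (mul_pos hb (Real.exp_pos _))
  set M : ℝ := max ((a + b * Real.exp (-c * x)) ^ (1 / x))
      ((a + b * Real.exp (-c * x')) ^ (1 / x')) with hMdef
  have hx' : 0 < x' := lt_of_lt_of_le hx (h1.trans h2)
  have hM : 0 < M := lt_max_of_lt_left (Real.rpow_pos_of_pos (hu x) _)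
  set L : ℝ := Real.log M with hLdef
  -- endpoint bounds
  have hend : ∀ y : ℝ, 0 < y → (a + b * Real.exp (-c * y)) ^ (1 / y) ≤ M →
      Real.log (a + b * Real.exp (-c * y)) ≤ y * L := by
    intro y hy hle
    have := Real.log_le_log (Real.rpow_pos_of_pos (hu y) _) hle
    rw [Real.log_rpow (hu y), one_div, inv_mul_le_iff₀ hy] at this
    simpa [hLdef] using this
  have hEx : Real.log (a + b * Real.exp (-c * x)) ≤ x * L := hend x hx (le_max_left _ _)
  have hEx' : Real.log (a + b * Real.exp (-c * x')) ≤ x' * L := hend x' hx' (le_max_right _ _)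
  have hlog : Real.log (a + b * Real.exp (-c * t)) ≤ t * L := by
    rcases le_or_gt x' x with hxx | hxx
    · have ht : t = x := le_antisymm (h2.trans hxx) h1
      rw [ht]; exact hEx
    · set lam : ℝ := (x' - t) / (x' - x) with hlam
      set mu : ℝ := (t - x) / (x' - x) with hmu
      have hden : 0 < x' - x := by linarith
      have hlam0 : 0 ≤ lam := div_nonneg (by linarith) hden.le
      have hmu0 : 0 ≤ mu := div_nonneg (by linarith) hden.le
      have hsum : lam + mu = 1 := by
        rw [hlam, hmu, ← add_div, div_eq_one_iff_eq hden.ne']; ring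
      have hcomb : lam * x + mu * x' = t := by
        rw [hlam, hmu, div_mul_eq_mul_div, div_mul_eq_mul_div, ← add_div, div_eq_iff hden.ne']; ring
      have hcv := (conv_aux a b c ha hb hc).2 (mem_univ x) (mem_univ x') hlam0 hmu0 hsum
      simp only [smul_eq_mul] at hcv
      rw [hcomb] at hcv
      have h3 : lam * Real.log (a + b * Real.exp (-c * x)) ≤ lam * (x * L) :=
        mul_le_mul_of_nonneg_left hEx hlam0
      have h4 : mu * Real.log (a + b * Real.exp (-c * x')) ≤ mu * (x' * L) :=
        mul_le_mul_of_nonneg_left hEx' hmu0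
      have h5 : t * L = lam * (x * L) + mu * (x' * L) := by rw [← hcomb]; ring
      linarith
  calc a + b * Real.exp (-c * t) = Real.exp (Real.log (a + b * Real.exp (-c * t))) :=
        (Real.exp_log (hu t)).symm
    _ ≤ Real.exp (t * L) := Real.exp_le_exp.2 hlog
    _ = M ^ t := by rw [Real.rpow_def_of_pos hM, mul_comm]

theorem statement19 (p c : ℝ) (hp0 : 0 < p) (hp1 : p < 1) (hc : 0 < c)
    (n : ℕ) (hn : 1 ≤ n) (x x' : ℝ) (xs : Fin n → ℝ) (hx : 0 < x)
    (hlo : ∀ i, x ≤ xs i) (hhi : ∀ i, xs i ≤ x') :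
    ∏ i, (2 * (1 - p * (1 - Real.exp (-c * xs i)))) ≤
      (max ((2 * (1 - p * (1 - Real.exp (-c * x)))) ^ (1 / x))
          ((2 * (1 - p * (1 - Real.exp (-c * x')))) ^ (1 / x'))) ^ (∑ i, xs i) := by
  have ha : (0:ℝ) < 2 - 2 * p := by linarith
  have hb : (0:ℝ) < 2 * p := by linarith
  have hrw : ∀ y : ℝ, 2 * (1 - p * (1 - Real.exp (-c * y)))
      = (2 - 2 * p) + (2 * p) * Real.exp (-c * y) := fun y => by ring
  simp only [hrw]
  have hu : ∀ y : ℝ, 0 < (2 - 2 * p) + (2 * p) * Real.exp (-c * y) := fun y =>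
    add_pos ha (mul_pos hb (Real.exp_pos _))
  set M : ℝ := max (((2 - 2 * p) + (2 * p) * Real.exp (-c * x)) ^ (1 / x))
      (((2 - 2 * p) + (2 * p) * Real.exp (-c * x')) ^ (1 / x')) with hMdef
  have hM : 0 < M := lt_max_of_lt_left (Real.rpow_pos_of_pos (hu x) _)
  have hsplit : M ^ (∑ i, xs i) = ∏ i, M ^ (xs i) := by
    rw [Real.rpow_def_of_pos hM, Finset.mul_sum, Real.exp_sum]
    exact Finset.prod_congr rfl fun i _ => (Real.rpow_def_of_pos hM _).symm
  rw [hsplit]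
  refine Finset.prod_le_prod (fun i _ => (hu (xs i)).le) (fun i _ => ?_)
  exact ptwise (2 - 2 * p) (2 * p) c ha hb hc x x' (xs i) hx (hlo i) (hhi i)
end
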